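/- Let {c_n}_{n≥1} and {d_{n+1}}_{n≥1} be real sequences, and define polynomials P_n by P_0(x)=1, P_1(x)=x-c_1, P_{n+1}(x) = (x-c_{n+1})P_n(x) - d_{n+1}(x^2+1)P_{n-1}(x). If {d_{n+1}}_{n≥1} is a positive chain sequence with minimal parameter sequence {ℓ_{n+1}}_{n≥0} (i.e., ℓ_1=0, 0<ℓ_{n+1}<1 for n≥1, and d_{n+1}=(1-ℓ_n)ℓ_{n+1}), then the leading coefficient of P_n equals ∏_{k=1}^{n}(1-ℓ_k), and in particular P_n has exact degree n. -/

import Mathlib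

open Polynomial

theorem stmt3 (c d ℓ : ℕ → ℝ) (P : ℕ → Polynomial ℝ)
    (h0 : P 0 = 1) (h1 : P 1 = X - C (c 1))
    (hrec : ∀ n, P (n+2) = (X - C (c (n+2))) * P (n+1) - C (d (n+2)) * (X^2 + 1) * P n)
    (hℓ1 : ℓ 1 = 0) (hℓ : ∀ n, 1 ≤ n → 0 < ℓ (n+1) ∧ ℓ (n+1) < 1)
    (hd : ∀ n, 1 ≤ n → d (n+1) = (1 - ℓ n) * ℓ (n+1)) :
    ∀ n : ℕ, (P n).leadingCoeff = ∏ k ∈ Finset.Icc 1 n, (1 - ℓ k) ∧ (P n).degree = n := by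
  have hfac : ∀ k, 1 ≤ k → (0:ℝ) < 1 - ℓ k := by
    intro k hk
    rcases Nat.lt_or_ge k 2 with h | h
    · interval_cases k
      simp [hℓ1]
    · have h2 := (hℓ (k-1) (by omega)).2
      have hk1 : k - 1 + 1 = k := by omega
      rw [hk1] at h2
      linarith
  have hpos : ∀ n, (0:ℝ) < ∏ k ∈ Finset.Icc 1 n, (1 - ℓ k) := by
    intro n
    apply Finset.prod_pos
    intro k hk
    exact hfac k (Finset.mem_Icc.mp hk).1
  have key : ∀ n : ℕ,
      ((P n).leadingCoeff = ∏ k ∈ Finset.Icc 1 n, (1 - ℓ k) ∧ (P n).degree = n) ∧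
      ((P (n+1)).leadingCoeff = ∏ k ∈ Finset.Icc 1 (n+1), (1 - ℓ k) ∧
        (P (n+1)).degree = (n+1 : ℕ)) := by
    intro n
    induction n with
    | zero =>
      refine ⟨⟨?_, ?_⟩, ?_, ?_⟩
      · simp [h0]
      · simp [h0]
      · have he : Finset.Icc 1 1 = {1} := rfl
        simp [h1, he, hℓ1]
      · simp [h1]
    | succ n ih =>
      obtain ⟨⟨hLC0, hdeg0⟩, hLC1, hdeg1⟩ := ih
      refine ⟨⟨hLC1, hdeg1⟩, ?_⟩
      have hnd1 : (P (n+1)).natDegree = n+1 := natDegree_eq_of_degree_eq_some hdeg1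
      have hnd0 : (P n).natDegree = n := natDegree_eq_of_degree_eq_some hdeg0
      -- coefficient computation
      have hc2 : (P (n+2)).coeff (n+2)
          = (P (n+1)).coeff (n+1) - d (n+2) * (P n).coeff n := by
        have z1 : (P (n+1)).coeff (n+2) = 0 :=
          coeff_eq_zero_of_degree_lt (by rw [hdeg1]; exact Nat.cast_lt.mpr (by omega))
        have z0 : (P n).coeff (n+2) = 0 :=
          coeff_eq_zero_of_degree_lt (by rw [hdeg0]; exact Nat.cast_lt.mpr (by omega))
        rw [hrec n, coeff_sub]
        have e1 : ((X - C (c (n+2))) * P (n+1)).coeff (n+2) = (P (n+1)).coeff (n+1) := by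
          rw [sub_mul, coeff_sub, coeff_X_mul, coeff_C_mul, z1, mul_zero, sub_zero]
        have e2 : (C (d (n+2)) * (X^2 + 1) * P n).coeff (n+2) = d (n+2) * (P n).coeff n := by
          rw [mul_assoc, coeff_C_mul]
          congr 1
          rw [add_mul, one_mul, coeff_add, coeff_X_pow_mul, z0, add_zero]
        rw [e1, e2]
      -- value of the coefficient
      have hval : (P (n+2)).coeff (n+2) = ∏ k ∈ Finset.Icc 1 (n+2), (1 - ℓ k) := by
        rw [hc2]
        have c1' : (P (n+1)).coeff (n+1) = ∏ k ∈ Finset.Icc 1 (n+1), (1 - ℓ k) := by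
          rw [← hLC1, leadingCoeff, hnd1]
        have c0' : (P n).coeff n = ∏ k ∈ Finset.Icc 1 n, (1 - ℓ k) := by
          rw [← hLC0, leadingCoeff, hnd0]
        have p2 : ∏ k ∈ Finset.Icc 1 (n+2), (1-ℓ k)
            = (∏ k ∈ Finset.Icc 1 (n+1), (1-ℓ k)) * (1 - ℓ (n+2)) :=
          Finset.prod_Icc_succ_top (by omega) _
        have p1 : ∏ k ∈ Finset.Icc 1 (n+1), (1-ℓ k)
            = (∏ k ∈ Finset.Icc 1 n, (1-ℓ k)) * (1 - ℓ (n+1)) :=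
          Finset.prod_Icc_succ_top (by omega) _
        rw [c1', c0', hd (n+1) (by omega), p2, p1]
        ring
      -- degree bound
      have hdle : (P (n+2)).degree ≤ ((n+2 : ℕ) : WithBot ℕ) := by
        rw [hrec n]
        refine le_trans (degree_sub_le _ _) (max_le ?_ ?_)
        · rw [degree_mul, degree_X_sub_C, hdeg1]
          exact_mod_cast le_of_eq (by ring)
        · rw [mul_assoc, degree_mul, degree_mul, hdeg0]
          have hx : (X^2 + (1:ℝ[X])).degree = 2 := by
            have := degree_X_pow_add_C (by norm_num : 0 < 2) (1:ℝ)
            simpa using this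
          rw [hx]
          refine le_trans (add_le_add_left degree_C_le _) ?_
          rw [zero_add]
          exact_mod_cast le_of_eq (by ring)
      have hne : (P (n+2)).coeff (n+2) ≠ 0 := by
        rw [hval]; exact ne_of_gt (hpos (n+2))
      have hdeg2 : (P (n+2)).degree = ((n+2 : ℕ) : WithBot ℕ) :=
        le_antisymm hdle (le_degree_of_ne_zero hne)
      have hnd2 : (P (n+2)).natDegree = n+2 := natDegree_eq_of_degree_eq_some hdeg2
      exact ⟨by rw [leadingCoeff, hnd2]; exact hval, hdeg2⟩
  intro n
  exact (key n).1
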